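/- arXiv:1908.10957 — 7 statements merged into one kernel-verified Lean document; each statement's English description precedes it below -/
import Mathlib

section
/- Let (X,ρ) be a compact metric space and let {τ_n}_{n≥1} be a sequence of Borel measurable maps τ_n : X → X converging uniformly to a continuous map τ : X → X. Set τ_{(0,n)} = τ_n ∘ τ_{n-1} ∘ ⋯ ∘ τ_1 (with τ_0 the identity). Let η be a Borel probability measure on X, let ν_i = (τ_{(0,i)})_* η be the pushforward measures, and let μ_n = (1/n) Σ_{i=1}^n ν_i. Then any weak-* limit point μ of the sequence {μ_n}_{n≥1} (i.e., any weak-* limit of a subsequence μ_{n_k}) is τ-invariant: τ_* μ = μ. -/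
open MeasureTheory Filter Topology
open scoped ENNReal

/-- `iterComp τ n = τ_n ∘ τ_{n-1} ∘ ⋯ ∘ τ_1` (with `iterComp τ 0 = id`). -/
def iterComp {X : Type*} (τ : ℕ → X → X) : ℕ → X → X
  | 0 => id
  | n + 1 => τ (n + 1) ∘ iterComp τ n

/-- Generalized Krylov–Bogoliubov theorem: any weak-* limit point of the Cesàro
averages of the pushforwards of an initial probability measure under a
non-autonomous system converging uniformly to a continuous map `τ` is `τ`-invariant. -/
theorem weakStarLimitPoint_isInvariant
    {X : Type*} [MetricSpace X] [CompactSpace X] [MeasurableSpace X] [BorelSpace X]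
    (τseq : ℕ → X → X) (hmeas : ∀ n, 1 ≤ n → Measurable (τseq n))
    (τ : X → X) (hτcont : Continuous τ)
    (hconv : TendstoUniformly τseq τ atTop)
    (η : Measure X) [IsProbabilityMeasure η]
    (μseq : ℕ → Measure X)
    (hμseq : ∀ n, μseq n
      = (n : ℝ≥0∞)⁻¹ • ∑ i ∈ Finset.Icc 1 n, Measure.map (iterComp τseq i) η)
    (μ : Measure X) [IsProbabilityMeasure μ]
    (φ : ℕ → ℕ) (hφ : StrictMono φ)
    (hlim : ∀ g : X → ℝ, Continuous g →
      Tendsto (fun k => ∫ x, g x ∂(μseq (φ k))) atTop (𝓝 (∫ x, g x ∂μ))) :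
    Measure.map τ μ = μ := by
  -- measurability of the compositions
  have hmeasIter : ∀ i, Measurable (iterComp τseq i) := by
    intro i
    induction i with
    | zero => exact measurable_id
    | succ n ih => exact (hmeas (n + 1) (Nat.le_add_left 1 n)).comp ih
  set ν : ℕ → Measure X := fun i => Measure.map (iterComp τseq i) η with hνdef
  have hprob : ∀ i, IsProbabilityMeasure (ν i) := fun i =>
    Measure.isProbabilityMeasure_map (hmeasIter i).aemeasurable
  -- integrability of continuous functions w.r.t. finite measures on a compact space
  have hCI : ∀ (f : X → ℝ), Continuous f → ∀ (m : Measure X), IsFiniteMeasure m →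
      Integrable f m := by
    intro f hf m hm
    obtain ⟨C, hC⟩ := isCompact_univ.exists_bound_of_continuousOn hf.continuousOn
    exact ⟨hf.aestronglyMeasurable,
      HasFiniteIntegral.of_bounded (C := C) (ae_of_all _ fun x => hC x (Set.mem_univ x))⟩
  -- relation ν (j+2) = map of ν (j+1)
  have hmapν : ∀ j : ℕ, ν (j + 2) = Measure.map (τseq (j + 2)) (ν (j + 1)) := by
    intro j
    have : iterComp τseq (j + 2) = τseq (j + 2) ∘ iterComp τseq (j + 1) := rfl
    rw [hνdef]
    simp only [this]
    rw [← Measure.map_map (hmeas (j + 2) (by omega)) (hmeasIter (j + 1))]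
  -- integral of a continuous function against μseq n
  have hInt : ∀ (f : X → ℝ), Continuous f → ∀ n : ℕ,
      ∫ x, f x ∂(μseq n) = (n : ℝ)⁻¹ * ∑ j ∈ Finset.range n, ∫ x, f x ∂(ν (j + 1)) := by
    intro f hf n
    rw [hμseq n, integral_smul_measure,
      integral_finset_sum_measure (fun i _ => hCI f hf _ (by have := hprob i; infer_instance))]
    have h1 : ((n : ℝ≥0∞)⁻¹).toReal = (n : ℝ)⁻¹ := by
      simp [ENNReal.toReal_inv]
    rw [h1, smul_eq_mul]
    congr 1
    rw [show Finset.Icc 1 n = Finset.Ico 1 (n + 1) from (Finset.Ico_add_one_right_eq_Icc (a := 1) (b := n)).symm,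
      Finset.sum_Ico_eq_sum_range]
    simp only [Nat.add_sub_cancel]
    exact Finset.sum_congr rfl fun j _ => by rw [Nat.add_comm 1 j]
  -- the key identity for integrals of continuous functions
  have key : ∀ g : X → ℝ, Continuous g →
      ∫ x, g x ∂(Measure.map τ μ) = ∫ x, g x ∂μ := by
    intro g hg
    rw [integral_map hτcont.measurable.aemeasurable hg.aestronglyMeasurable]
    set G : X → ℝ := fun x => g (τ x) with hGdef
    have hGc : Continuous G := hg.comp hτcont
    obtain ⟨C, hC⟩ := isCompact_univ.exists_bound_of_continuousOn hg.continuousOn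
    have hC' : ∀ x, ‖g x‖ ≤ C := fun x => hC x (Set.mem_univ x)
    -- the discrepancy sequence
    set b : ℕ → ℝ := fun j => (∫ x, G x ∂(ν (j + 1))) - ∫ x, g x ∂(ν (j + 2)) with hbdef
    -- b tends to 0
    have hb0 : Tendsto b atTop (𝓝 0) := by
      have huc : UniformContinuous g := CompactSpace.uniformContinuous_of_continuous hg
      have hgu : TendstoUniformly (fun n => g ∘ τseq n) (g ∘ τ) atTop :=
        huc.comp_tendstoUniformly hconv
      rw [Metric.nhds_basis_closedBall.tendsto_right_iff]
      intro ε hε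
      have hev := (Metric.tendstoUniformly_iff.mp hgu) ε hε
      obtain ⟨N, hN⟩ := eventually_atTop.mp hev
      refine eventually_atTop.2 ⟨N, fun j hj => ?_⟩
      have hintmap : ∫ x, g x ∂(ν (j + 2)) = ∫ x, g (τseq (j + 2) x) ∂(ν (j + 1)) := by
        rw [hmapν j, integral_map (hmeas (j + 2) (by omega)).aemeasurable
          hg.aestronglyMeasurable]
      have hi1 : Integrable G (ν (j + 1)) := hCI G hGc _ (by have := hprob (j + 1); infer_instance)
      have hi2 : Integrable (fun x => g (τseq (j + 2) x)) (ν (j + 1)) := by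
        have : IsFiniteMeasure (ν (j + 1)) := by have := hprob (j + 1); infer_instance
        exact ⟨((hg.measurable.comp (hmeas (j + 2) (by omega)))).aestronglyMeasurable,
          HasFiniteIntegral.of_bounded (C := C) (ae_of_all _ fun x => hC' _)⟩
      have hbj : b j = ∫ x, (G x - g (τseq (j + 2) x)) ∂(ν (j + 1)) := by
        rw [hbdef]
        simp only
        rw [hintmap, integral_sub hi1 hi2]
      have hbound : ∀ x, ‖G x - g (τseq (j + 2) x)‖ ≤ ε := by
        intro x
        have := hN (j + 2) (by omega) x
        rw [dist_eq_norm] at this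
        exact this.le
      have : IsProbabilityMeasure (ν (j + 1)) := hprob (j + 1)
      have hle : ‖b j‖ ≤ ε * ((ν (j + 1)) Set.univ).toReal := by
        rw [hbj]
        exact norm_integral_le_of_norm_le_const (ae_of_all _ hbound)
      simp only [measure_univ, ENNReal.toReal_one, mul_one] at hle
      simpa [Metric.mem_closedBall, dist_zero_right] using hle
    -- difference of integrals against μseq n tends to 0
    have hrw : ∀ n : ℕ, (∫ x, G x ∂(μseq n)) - ∫ x, g x ∂(μseq n)
        = (n : ℝ)⁻¹ * ∑ j ∈ Finset.range n, b j
          + (n : ℝ)⁻¹ * ((∫ x, g x ∂(ν (n + 1))) - ∫ x, g x ∂(ν 1)) := by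
      intro n
      rw [hInt G hGc n, hInt g hg n, ← mul_sub, ← Finset.sum_sub_distrib, ← mul_add]
      congr 1
      have htel : ∑ j ∈ Finset.range n,
          ((∫ x, g x ∂(ν (j + 2))) - ∫ x, g x ∂(ν (j + 1)))
          = (∫ x, g x ∂(ν (n + 1))) - ∫ x, g x ∂(ν 1) := by
        simpa using Finset.sum_range_sub (fun j => ∫ x, g x ∂(ν (j + 1))) n
      rw [← htel, ← Finset.sum_add_distrib]
      exact Finset.sum_congr rfl fun j _ => by simp only [hbdef]; ring
    have t1 : Tendsto (fun n : ℕ => (n : ℝ)⁻¹ * ∑ j ∈ Finset.range n, b j)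
        atTop (𝓝 0) := hb0.cesaro
    have t2 : Tendsto (fun n : ℕ =>
        (n : ℝ)⁻¹ * ((∫ x, g x ∂(ν (n + 1))) - ∫ x, g x ∂(ν 1))) atTop (𝓝 0) := by
      have hbd : ∀ m : ℕ, ‖∫ x, g x ∂(ν m)‖ ≤ C := by
        intro m
        have : IsProbabilityMeasure (ν m) := hprob m
        have h6 : ‖∫ x, g x ∂(ν m)‖ ≤ C * ((ν m) Set.univ).toReal :=
          norm_integral_le_of_norm_le_const (ae_of_all _ fun x => hC' x)
        simpa [measure_univ] using h6
      apply squeeze_zero_norm (a := fun n : ℕ => (n : ℝ)⁻¹ * (C + C))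
      · intro n
        rw [norm_mul, norm_inv, Real.norm_natCast]
        gcongr
        calc ‖(∫ x, g x ∂(ν (n + 1))) - ∫ x, g x ∂(ν 1)‖
            ≤ ‖∫ x, g x ∂(ν (n + 1))‖ + ‖∫ x, g x ∂(ν 1)‖ := norm_sub_le _ _
          _ ≤ C + C := add_le_add (hbd _) (hbd _)
      · simpa using tendsto_inv_atTop_nhds_zero_nat.mul_const (C + C)
    have hd : Tendsto (fun n : ℕ => (∫ x, G x ∂(μseq n)) - ∫ x, g x ∂(μseq n))
        atTop (𝓝 0) := by
      simp only [hrw]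
      simpa using t1.add t2
    have h3 : Tendsto (fun k => (∫ x, G x ∂(μseq (φ k))) - ∫ x, g x ∂(μseq (φ k)))
        atTop (𝓝 0) := hd.comp hφ.tendsto_atTop
    have h4 := (hlim G hGc).sub (hlim g hg)
    have h5 := tendsto_nhds_unique h4 h3
    have : (∫ x, G x ∂μ) = ∫ x, g x ∂μ := by linarith [sub_eq_zero.mp h5]
    exact this
  -- conclude equality of measures
  have : IsProbabilityMeasure (Measure.map τ μ) :=
    Measure.isProbabilityMeasure_map hτcont.measurable.aemeasurable
  apply ext_of_forall_lintegral_eq_of_IsFiniteMeasure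
  intro f
  have hfc : Continuous fun x => ((f x : NNReal) : ℝ) :=
    NNReal.continuous_coe.comp f.continuous
  have hi1 : Integrable (fun x => ((f x : NNReal) : ℝ)) (Measure.map τ μ) :=
    hCI _ hfc _ inferInstance
  have hi2 : Integrable (fun x => ((f x : NNReal) : ℝ)) μ := hCI _ hfc _ inferInstance
  rw [lintegral_coe_eq_integral _ hi1, lintegral_coe_eq_integral _ hi2, key _ hfc]
end

section
/- Let (X,ρ) be a compact metric space and let {τ_n}_{n≥1} be a sequence of Borel measurable maps τ_n : X → X converging uniformly to a Borel measurable map τ : X → X. Set τ_{(0,n)} = τ_n ∘ τ_{n-1} ∘ ⋯ ∘ τ_1 (with τ_0 the identity). Let η be a Borel probability measure on X and let μ_n = (1/n) Σ_{i=1}^n (τ_{(0,i)})_* η. Then for every continuous function g : X → ℝ, the difference ∫ g dμ_n − ∫ (g ∘ τ) dμ_n converges to 0 as n → ∞. -/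
open MeasureTheory Filter Topology
open scoped ENNReal

/-- For the Cesàro averages `μ_n` of the pushforwards of a probability measure `η`
under a non-autonomous system converging uniformly to a Borel map `τ`, one has
`∫ g dμ_n − ∫ (g ∘ τ) dμ_n → 0` for every continuous `g`. -/
theorem integral_sub_comp_tendsto_zero
    {X : Type*} [MetricSpace X] [CompactSpace X] [MeasurableSpace X] [BorelSpace X]
    (τseq : ℕ → X → X) (hmeas : ∀ n, 1 ≤ n → Measurable (τseq n))
    (τ : X → X) (hτmeas : Measurable τ)
    (hconv : TendstoUniformly τseq τ atTop)
    (η : Measure X) [IsProbabilityMeasure η]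
    (μseq : ℕ → Measure X)
    (hμseq : ∀ n, μseq n
      = (n : ℝ≥0∞)⁻¹ • ∑ i ∈ Finset.Icc 1 n, Measure.map (iterComp τseq i) η) :
    ∀ g : X → ℝ, Continuous g →
      Tendsto (fun n => (∫ x, g x ∂(μseq n)) - ∫ x, g (τ x) ∂(μseq n)) atTop (𝓝 0) := by
  intro g hg
  -- measurability of the compositions
  have hiter : ∀ i, Measurable (iterComp τseq i) := by
    intro i
    induction i with
    | zero => exact measurable_id
    | succ n ih => exact (hmeas (n + 1) (Nat.le_add_left 1 n)).comp ih
  haveI hprob : ∀ i, IsProbabilityMeasure (Measure.map (iterComp τseq i) η) := fun i =>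
    Measure.isProbabilityMeasure_map (hiter i).aemeasurable
  -- a uniform bound on g
  obtain ⟨C, hC0, hC⟩ : ∃ C, 0 ≤ C ∧ ∀ x, ‖g x‖ ≤ C := by
    obtain ⟨B, hB⟩ := (isCompact_univ.image hg).isBounded.exists_norm_le
    exact ⟨max B 0, le_max_right _ _, fun x =>
      le_trans (hB _ ⟨x, Set.mem_univ x, rfl⟩) (le_max_left _ _)⟩
  -- integrability of bounded measurable functions against any probability measure
  have hintc : ∀ (f : X → ℝ), Measurable f → (∀ x, ‖f x‖ ≤ C) →
      ∀ (ν : Measure X), IsProbabilityMeasure ν → Integrable f ν := by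
    intro f hfm hfb ν hν
    exact ⟨hfm.aestronglyMeasurable,
      HasFiniteIntegral.of_bounded (C := C) (Eventually.of_forall hfb)⟩
  -- integrals against μseq n
  have key : ∀ (f : X → ℝ), Measurable f → (∀ x, ‖f x‖ ≤ C) → ∀ n, (∫ x, f x ∂(μseq n))
      = (n : ℝ)⁻¹ * ∑ i ∈ Finset.Icc 1 n, ∫ x, f (iterComp τseq i x) ∂η := by
    intro f hfm hfb n
    rw [hμseq n, integral_smul_measure, integral_finset_sum_measure
      (fun i _ => hintc f hfm hfb _ (hprob i))]
    congr 1
    · simp [ENNReal.toReal_inv]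
    · exact Finset.sum_congr rfl fun i _ =>
        integral_map (hiter i).aemeasurable hfm.aestronglyMeasurable
  set A : ℕ → ℝ := fun i => ∫ x, g (iterComp τseq i x) ∂η with hA
  set B : ℕ → ℝ := fun i => ∫ x, g (τ (iterComp τseq i x)) ∂η with hB
  set E : ℕ → ℝ := fun i => A (i + 1) - B i with hE
  have hAbd : ∀ i, ‖A i‖ ≤ C := by
    intro i
    calc ‖A i‖ ≤ C * (η Set.univ).toReal :=
          norm_integral_le_of_norm_le_const (Eventually.of_forall fun x => hC _)
      _ = C := by simp
  -- E tends to 0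
  have hEtend : Tendsto E atTop (𝓝 0) := by
    rw [Metric.tendsto_atTop]
    intro ε hε
    have hgu : UniformContinuous g := CompactSpace.uniformContinuous_of_continuous hg
    have hgconv : TendstoUniformly (fun n x => g (τseq n x)) (fun x => g (τ x)) atTop :=
      hgu.comp_tendstoUniformly hconv
    rw [Metric.tendstoUniformly_iff] at hgconv
    have h2 := hgconv (ε / 2) (by linarith)
    rw [eventually_atTop] at h2
    obtain ⟨N, hN⟩ := h2
    refine ⟨N, fun i hi => ?_⟩
    have hle : ∀ x, ‖g (iterComp τseq (i + 1) x) - g (τ (iterComp τseq i x))‖ ≤ ε / 2 := by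
      intro x
      have h3 := hN (i + 1) (by omega) (iterComp τseq i x)
      have hdef : iterComp τseq (i + 1) x = τseq (i + 1) (iterComp τseq i x) := rfl
      rw [hdef]
      rw [Real.dist_eq] at h3
      rw [Real.norm_eq_abs, abs_sub_comm]
      linarith
    have hEi : E i = ∫ x, (g (iterComp τseq (i + 1) x) - g (τ (iterComp τseq i x))) ∂η := by
      rw [hE]
      exact (integral_sub
        (hintc _ (hg.measurable.comp (hiter (i + 1))) (fun x => hC _) η inferInstance)
        (hintc _ ((hg.measurable.comp hτmeas).comp (hiter i)) (fun x => hC _) η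
          inferInstance)).symm
    have : ‖E i‖ ≤ ε / 2 := by
      rw [hEi]
      calc ‖∫ x, (g (iterComp τseq (i + 1) x) - g (τ (iterComp τseq i x))) ∂η‖
          ≤ (ε / 2) * (η Set.univ).toReal :=
            norm_integral_le_of_norm_le_const (Eventually.of_forall hle)
        _ = ε / 2 := by simp
    rw [Real.dist_eq, sub_zero]
    calc |E i| ≤ ε / 2 := this
      _ < ε := by linarith
  -- rewrite the difference of integrals
  have hD : ∀ n, (∫ x, g x ∂(μseq n)) - ∫ x, g (τ x) ∂(μseq n)
      = (n : ℝ)⁻¹ * (A 1 - A (n + 1)) + (n : ℝ)⁻¹ * ∑ j ∈ Finset.range n, E (j + 1) := by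
    intro n
    rw [key g hg.measurable hC n,
      key (fun x => g (τ x)) (hg.measurable.comp hτmeas) (fun x => hC _) n,
      ← mul_sub, ← Finset.sum_sub_distrib, ← mul_add]
    congr 1
    have hIcc : Finset.Icc 1 n = Finset.Ico 1 (n + 1) := by
      rw [Finset.Ico_add_one_right_eq_Icc]
    rw [hIcc, Finset.sum_Ico_eq_sum_range]
    simp only [Nat.add_sub_cancel]
    have : ∀ j, A (1 + j) - B (1 + j) = (A (j + 1) - A (j + 1 + 1)) + E (j + 1) := by
      intro j
      simp only [hE, add_comm 1 j]
      ring
    rw [Finset.sum_congr rfl fun j _ => this j, Finset.sum_add_distrib]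
    congr 1
    · have := Finset.sum_range_sub (f := fun j => A (j + 1)) n
      have h' : ∑ j ∈ Finset.range n, (A (j + 1) - A (j + 1 + 1))
          = - ∑ j ∈ Finset.range n, (A (j + 1 + 1) - A (j + 1)) := by
        rw [← Finset.sum_neg_distrib]
        exact Finset.sum_congr rfl fun j _ => by ring
      rw [h', this]
      ring
  -- conclude via the two limits
  have h1 : Tendsto (fun n : ℕ => (n : ℝ)⁻¹ * (A 1 - A (n + 1))) atTop (𝓝 0) := by
    apply squeeze_zero_norm (a := fun n : ℕ => (n : ℝ)⁻¹ * (2 * C))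
    · intro n
      rw [norm_mul, norm_inv, Real.norm_natCast]
      gcongr
      calc ‖A 1 - A (n + 1)‖ ≤ ‖A 1‖ + ‖A (n + 1)‖ := norm_sub_le _ _
        _ ≤ C + C := add_le_add (hAbd 1) (hAbd (n + 1))
        _ = 2 * C := by ring
    · simpa using tendsto_inv_atTop_nhds_zero_nat.mul_const (2 * C)
  have h2 : Tendsto (fun n : ℕ => (n : ℝ)⁻¹ * ∑ j ∈ Finset.range n, E (j + 1)) atTop (𝓝 0) := by
    have hE1 : Tendsto (fun j => E (j + 1)) atTop (𝓝 0) :=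
      hEtend.comp (tendsto_add_atTop_nat 1)
    simpa [smul_eq_mul] using hE1.cesaro
  have := h1.add h2
  rw [add_zero] at this
  exact Tendsto.congr (fun n => (hD n).symm) this
end

section
/- For n ≥ 2 define τ_n : [0,1] → [0,1] by τ_n(x) = (1 − 1/n)x for x ∈ [0, 1/2) and τ_n(x) = 2x − 1 for x ∈ [1/2, 1], and let m be Lebesgue measure on [0,1]. Set τ_{(2,k)} = τ_k ∘ τ_{k-1} ∘ ⋯ ∘ τ_2 for k ≥ 2. Then for every δ > 0, sup_{k≥2} m(τ_{(2,k)}^{-1}([0,δ])) = 1; in particular, for every δ > 0 and every ε > 0 there exists k such that m(τ_{(2,k)}^{-1}([0,δ])) > 1 − ε. -/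
open MeasureTheory Filter Topology
open scoped ENNReal

/-- The maps `τ_n(x) = (1 − 1/n)x` on `[0,1/2)` and `τ_n(x) = 2x − 1` on `[1/2,1]`. -/
noncomputable def tauN (n : ℕ) (x : ℝ) : ℝ :=
  if x < 1 / 2 then (1 - 1 / (n : ℝ)) * x else 2 * x - 1

/-- `comp2 k = τ_k ∘ τ_{k-1} ∘ ⋯ ∘ τ_2` for `k ≥ 2`. -/
noncomputable def comp2 : ℕ → ℝ → ℝ
  | 0 => id
  | 1 => id
  | k + 2 => tauN (k + 2) ∘ comp2 (k + 1)

/-- Lebesgue measure on `[0,1]`. -/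
noncomputable def m : Measure ℝ := volume.restrict (Set.Icc 0 1)

lemma one_div_nat_mem (n : ℕ) : (0:ℝ) ≤ 1 / (n:ℝ) ∧ 1 / (n:ℝ) ≤ 1 := by
  constructor
  · positivity
  · rcases Nat.eq_zero_or_pos n with h | h
    · simp [h]
    · rw [div_le_one (by exact_mod_cast h)]
      exact_mod_cast h

lemma tauN_mem (n : ℕ) {x : ℝ} (hx : x ∈ Set.Icc (0:ℝ) 1) :
    tauN n x ∈ Set.Icc (0:ℝ) 1 := by
  obtain ⟨h0, h1⟩ := one_div_nat_mem n
  rcases hx with ⟨hx0, hx1⟩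
  unfold tauN
  split_ifs with h
  · constructor
    · have : (0:ℝ) ≤ 1 - 1/(n:ℝ) := by linarith
      positivity
    · nlinarith
  · constructor <;> [linarith; linarith]

lemma comp2_mem : ∀ k : ℕ, ∀ {x : ℝ}, x ∈ Set.Icc (0:ℝ) 1 → comp2 k x ∈ Set.Icc (0:ℝ) 1 := by
  intro k
  induction k with
  | zero => intro x hx; simpa [comp2] using hx
  | succ j ih =>
    intro x hx
    cases j with
    | zero => simpa [comp2] using hx
    | succ i =>
      show tauN (i+2) (comp2 (i+1) x) ∈ Set.Icc (0:ℝ) 1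
      exact tauN_mem _ (ih hx)

lemma comp2_succ_apply (k : ℕ) (hk : 1 ≤ k) (x : ℝ) :
    comp2 (k+1) x = tauN (k+1) (comp2 k x) := by
  match k, hk with
  | (j+1), _ => rfl

/-- Quantitative decay after falling below 1/2. -/
lemma decay (k : ℕ) (hk : 1 ≤ k) {x : ℝ} (hx : x ∈ Set.Icc (0:ℝ) 1)
    (hlow : comp2 k x < 1/2) :
    ∀ K, k ≤ K → 0 ≤ comp2 K x ∧ comp2 K x < 1/2 ∧
      comp2 K x * K ≤ comp2 k x * k := by
  intro K hK
  induction K, hK using Nat.le_induction with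
  | base => exact ⟨(comp2_mem k hx).1, hlow, le_refl _⟩
  | succ K hkK ih =>
    obtain ⟨h0, h12, hprod⟩ := ih
    have hK1 : 1 ≤ K := le_trans hk hkK
    have heq : comp2 (K+1) x = (1 - 1/((K:ℝ)+1)) * comp2 K x := by
      rw [comp2_succ_apply K hK1, tauN, if_pos h12]
      push_cast
      ring
    have hKpos : (0:ℝ) < (K:ℝ) + 1 := by positivity
    have hfac0 : (0:ℝ) ≤ 1 - 1/((K:ℝ)+1) := by
      have : 1/((K:ℝ)+1) ≤ 1 := by
        rw [div_le_one hKpos]; linarith [Nat.cast_nonneg (α := ℝ) K]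
      linarith
    have hfac1 : 1 - 1/((K:ℝ)+1) ≤ 1 := by
      have : (0:ℝ) ≤ 1/((K:ℝ)+1) := by positivity
      linarith
    refine ⟨by rw [heq]; positivity, ?_, ?_⟩
    · rw [heq]; nlinarith
    · have : comp2 (K+1) x * ((K:ℝ)+1) = comp2 K x * K := by
        rw [heq]; field_simp; ring
      push_cast
      rw [this]
      exact hprod

/-- If the orbit is still above 1/2 at time k, then `2^(k-1) (1-x) ≤ 1 - comp2 k x`. -/
lemma bad_bound : ∀ k : ℕ, 1 ≤ k → ∀ {x : ℝ}, x ∈ Set.Icc (0:ℝ) 1 →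
    1/2 ≤ comp2 k x → (2:ℝ)^(k-1) * (1 - x) ≤ 1 - comp2 k x := by
  intro k hk
  induction k, hk using Nat.le_induction with
  | base => intro x hx h; simp [comp2]
  | succ k hk ih =>
    intro x hx h
    have hmem := comp2_mem k hx
    rcases lt_or_ge (comp2 k x) (1/2) with hlt | hge
    · exfalso
      have heq : comp2 (k+1) x = (1 - 1/((k:ℝ)+1)) * comp2 k x := by
        rw [comp2_succ_apply k hk, tauN, if_pos hlt]
        push_cast; ring
      have h1 : 1/((k:ℝ)+1) ≥ 0 := by positivity
      nlinarith [hmem.1]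
    · have heq : comp2 (k+1) x = 2 * comp2 k x - 1 := by
        rw [comp2_succ_apply k hk, tauN, if_neg (not_lt.mpr hge)]
      have hih := ih hx hge
      have hpow : (2:ℝ)^((k+1)-1) = 2 * (2:ℝ)^(k-1) := by
        obtain ⟨j, rfl⟩ := Nat.exists_eq_add_of_le hk
        simp [pow_succ]
        ring
      rw [heq, hpow]
      nlinarith

lemma bad_subset (k : ℕ) (hk : 1 ≤ k) {x : ℝ} (hx : x ∈ Set.Icc (0:ℝ) 1)
    (h : 1/2 ≤ comp2 k x) : 1 - (1/2:ℝ)^k ≤ x := by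
  have hb := bad_bound k hk hx h
  have ha : (2:ℝ)^(k-1) * (1 - x) ≤ 1/2 := by linarith
  have hpos : (0:ℝ) < 2^(k-1) := by positivity
  have h1x : 1 - x ≤ (1/2) / 2^(k-1) := by
    rw [le_div_iff₀ hpos]; linarith [mul_comm ((2:ℝ)^(k-1)) (1-x)]
  have heq : (1/2:ℝ)^k = (1/2) / 2^(k-1) := by
    obtain ⟨j, rfl⟩ := Nat.exists_eq_add_of_le hk
    have : 1 + j - 1 = j := by omega
    rw [this, pow_add, pow_one, div_pow, one_pow]
    ring
  linarith [heq ▸ h1x]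

/-- Key quantitative lemma. -/
lemma key (δ : ℝ) (hδ : 0 < δ) (ε : ℝ) (hε : 0 < ε) :
    ∃ k : ℕ, 2 ≤ k ∧ ENNReal.ofReal (1 - ε) < m (comp2 k ⁻¹' Set.Icc 0 δ) := by
  obtain ⟨n, hn⟩ := exists_pow_lt_of_lt_one hε (by norm_num : (1/2:ℝ) < 1)
  set k := max n 2 with hkdef
  have hk2 : 2 ≤ k := le_max_right _ _
  have hk1 : 1 ≤ k := le_trans (by norm_num) hk2
  have hpowlt : (1/2:ℝ)^k < ε :=
    lt_of_le_of_lt (pow_le_pow_of_le_one (by norm_num) (by norm_num) (le_max_left _ _)) hn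
  have hpowpos : (0:ℝ) < (1/2:ℝ)^k := by positivity
  have hpowle : (1/2:ℝ)^k ≤ 1/2 := by
    calc (1/2:ℝ)^k ≤ (1/2:ℝ)^1 := pow_le_pow_of_le_one (by norm_num) (by norm_num) hk1
    _ = 1/2 := pow_one _
  set K := max k (⌈(k:ℝ)/(2*δ)⌉₊) with hKdef
  have hKk : k ≤ K := le_max_left _ _
  have hK2 : 2 ≤ K := le_trans hk2 hKk
  have hKpos : (0:ℝ) < K := by
    have : 0 < K := lt_of_lt_of_le (by norm_num) hK2
    exact_mod_cast this
  have hKge : (k:ℝ)/(2*δ) ≤ K := by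
    calc (k:ℝ)/(2*δ) ≤ ⌈(k:ℝ)/(2*δ)⌉₊ := Nat.le_ceil _
    _ ≤ K := by exact_mod_cast le_max_right _ _
  refine ⟨K, hK2, ?_⟩
  set t : ℝ := 1 - (1/2:ℝ)^k with htdef
  have ht0 : 0 < t := by rw [htdef]; linarith
  have ht1 : t ≤ 1 := by rw [htdef]; linarith
  have htε : 1 - ε < t := by rw [htdef]; linarith
  have hsub : Set.Ico (0:ℝ) t ⊆ comp2 K ⁻¹' Set.Icc 0 δ := by
    intro x hx
    have hx01 : x ∈ Set.Icc (0:ℝ) 1 := ⟨hx.1, le_trans hx.2.le ht1⟩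
    have hlow : comp2 k x < 1/2 := by
      by_contra hge
      have := bad_subset k hk1 hx01 (not_lt.mp hge)
      have : t ≤ x := this
      exact absurd hx.2 (not_lt.mpr this)
    obtain ⟨h0, h12, hprod⟩ := decay k hk1 hx01 hlow K hKk
    refine ⟨h0, ?_⟩
    have hck1 : comp2 k x ≤ 1 := (comp2_mem k hx01).2
    have hkK : (k:ℝ) ≤ 2*δ*K := by
      rw [div_le_iff₀ (by positivity)] at hKge
      linarith
    have hKK : comp2 K x * K ≤ δ * K := by
      calc comp2 K x * K ≤ comp2 k x * k := hprod
      _ ≤ (1/2) * (2*δ*K) := by nlinarith [(comp2_mem k hx01).1]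
      _ = δ * K := by ring
    exact le_of_mul_le_mul_right (by linarith [hKK]) hKpos
  have hIco : m (Set.Ico (0:ℝ) t) = ENNReal.ofReal t := by
    rw [m, Measure.restrict_apply measurableSet_Ico]
    have : Set.Ico (0:ℝ) t ∩ Set.Icc 0 1 = Set.Ico 0 t := by
      apply Set.inter_eq_self_of_subset_left
      intro y hy
      exact ⟨hy.1, le_trans hy.2.le ht1⟩
    rw [this, Real.volume_Ico]
    simp
  calc ENNReal.ofReal (1 - ε) < ENNReal.ofReal t :=
        (ENNReal.ofReal_lt_ofReal_iff ht0).mpr htε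
  _ = m (Set.Ico (0:ℝ) t) := hIco.symm
  _ ≤ m (comp2 K ⁻¹' Set.Icc 0 δ) := measure_mono hsub

/-- For every `δ > 0`, `sup_{k ≥ 2} m(τ_{(2,k)}^{-1}([0,δ])) = 1`; in particular for
every `δ, ε > 0` there is `k ≥ 2` with `m(τ_{(2,k)}^{-1}([0,δ])) > 1 − ε`. -/
theorem sup_measure_preimage_eq_one :
    ∀ δ : ℝ, 0 < δ →
      (⨆ (k : ℕ) (_ : 2 ≤ k), m (comp2 k ⁻¹' Set.Icc 0 δ)) = 1 ∧
      ∀ ε : ℝ, 0 < ε → ∃ k : ℕ, 2 ≤ k ∧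
        ENNReal.ofReal (1 - ε) < m (comp2 k ⁻¹' Set.Icc 0 δ) := by
  intro δ hδ
  have hm_univ : m Set.univ = 1 := by
    rw [m, Measure.restrict_apply_univ, Real.volume_Icc]
    norm_num
  constructor
  · apply le_antisymm
    · apply iSup_le; intro k; apply iSup_le; intro _
      calc m (comp2 k ⁻¹' Set.Icc 0 δ) ≤ m Set.univ := measure_mono (Set.subset_univ _)
      _ = 1 := hm_univ
    · by_contra h
      push_neg at h
      set a := ⨆ (k : ℕ) (_ : 2 ≤ k), m (comp2 k ⁻¹' Set.Icc 0 δ) with ha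
      have hlt : a < 1 := h
      have hane : a ≠ ⊤ := ne_top_of_lt hlt
      have htr : a.toReal < 1 := by
        have := (ENNReal.toReal_lt_toReal hane (by norm_num)).mpr hlt
        simpa using this
      obtain ⟨k, hk2, hklt⟩ := key δ hδ (1 - a.toReal) (by linarith)
      rw [show (1 : ℝ) - (1 - a.toReal) = a.toReal by ring,
        ENNReal.ofReal_toReal hane] at hklt
      have : m (comp2 k ⁻¹' Set.Icc 0 δ) ≤ a :=
        le_iSup₂ (f := fun k (_ : 2 ≤ k) => m (comp2 k ⁻¹' Set.Icc 0 δ)) k hk2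
      exact absurd (lt_of_lt_of_le hklt this) (lt_irrefl a)
  · exact key δ hδ
end

section
/- For n ≥ 2 define τ_n : [0,1] → [0,1] by τ_n(x) = (1 − 1/n)x for x ∈ [0, 1/2) and τ_n(x) = 2x − 1 for x ∈ [1/2, 1], and set τ_{(2,k)} = τ_k ∘ τ_{k-1} ∘ ⋯ ∘ τ_2 for k ≥ 2. Then for every k ≥ 2 the preimage of [0, 1/2] under τ_{(2,k)} is the interval [0, 1 − 2^{-k}], i.e., τ_{(2,k)}^{-1}([0, 1/2]) = [0, Σ_{i=1}^{k} 2^{-i}]. -/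
open MeasureTheory Filter Topology

lemma comp2_succ (k : ℕ) (hk : 1 ≤ k) :
    comp2 (k + 1) = tauN (k + 1) ∘ comp2 k := by
  obtain ⟨n, rfl⟩ : ∃ n, k = n + 1 := ⟨k - 1, by omega⟩
  rfl

lemma sum_geom_half (k : ℕ) :
    (∑ i ∈ Finset.Icc 1 k, (1 / 2 : ℝ) ^ i) = 1 - (1 / 2 : ℝ) ^ k := by
  induction k with
  | zero => simp
  | succ n ih =>
    rw [Finset.sum_Icc_succ_top (by omega), ih]
    ring

lemma comp2_key (k : ℕ) (hk : 2 ≤ k) : ∀ x : ℝ, 0 ≤ x → x ≤ 1 →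
    (x ≤ 1 - (1 / 2 : ℝ) ^ k → 0 ≤ comp2 k x ∧ comp2 k x ≤ 1 / 2) ∧
    (1 - (1 / 2 : ℝ) ^ k < x → comp2 k x = (2 : ℝ) ^ k / 2 * (x - 1) + 1) := by
  induction k, hk using Nat.le_induction with
  | base =>
    intro x hx0 hx1
    have h2 : comp2 2 x = tauN 2 x := rfl
    rw [h2]
    unfold tauN
    norm_num
    constructor
    · intro hle
      split_ifs with h
      · constructor <;> nlinarith
      · constructor <;> linarith
    · intro hgt
      split_ifs with h
      · linarith
      · ring
  | succ n hn ih =>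
    intro x hx0 hx1
    have hcomp : comp2 (n + 1) x = tauN (n + 1) (comp2 n x) := by
      rw [comp2_succ n (by omega)]; rfl
    obtain ⟨ih1, ih2⟩ := ih x hx0 hx1
    have hq : (0 : ℝ) < (1 / 2 : ℝ) ^ n := by positivity
    have hp : (0 : ℝ) < (2 : ℝ) ^ n := by positivity
    have hpq : (2 : ℝ) ^ n * (1 / 2 : ℝ) ^ n = 1 := by
      rw [← mul_pow]; norm_num
    have hcast : (1 : ℝ) ≤ ((n : ℝ) + 1) := by have := Nat.cast_nonneg (α := ℝ) n; linarith
    have hn3 : (3 : ℝ) ≤ ((n : ℝ) + 1) := by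
      have : (2 : ℝ) ≤ (n : ℝ) := by exact_mod_cast hn
      linarith
    rw [hcomp]
    unfold tauN
    push_cast
    constructor
    · intro hle
      by_cases hcase : x ≤ 1 - (1 / 2 : ℝ) ^ n
      · obtain ⟨hy0, hy1⟩ := ih1 hcase
        split_ifs with h
        · constructor
          · have : 0 ≤ 1 - 1 / ((n : ℝ) + 1) := by
              rw [sub_nonneg, div_le_one (by linarith)]; linarith
            positivity
          · nlinarith [div_nonneg (le_of_lt (by linarith : (0:ℝ) < 1)) (by linarith : (0:ℝ) ≤ (n:ℝ)+1)]
        · constructor <;> linarith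
      · push_neg at hcase
        have hy := ih2 hcase
        have hy1 : (1 : ℝ) / 2 < comp2 n x := by
          rw [hy]; nlinarith
        have hy2 : comp2 n x ≤ 3 / 4 := by
          rw [hy]
          have : x - 1 ≤ -(1 / 2 : ℝ) ^ (n + 1) := by linarith
          nlinarith [pow_succ (1/2 : ℝ) n]
        split_ifs with h
        · linarith
        · constructor <;> linarith
    · intro hgt
      have hcn : 1 - (1 / 2 : ℝ) ^ n < x := by
        have : (1 / 2 : ℝ) ^ (n + 1) < (1 / 2 : ℝ) ^ n := by
          rw [pow_succ]; nlinarith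
        linarith
      have hy := ih2 hcn
      have hy3 : (3 : ℝ) / 4 < comp2 n x := by
        rw [hy]
        have : -(1 / 2 : ℝ) ^ (n + 1) < x - 1 := by linarith
        nlinarith [pow_succ (1/2 : ℝ) n]
      split_ifs with h
      · linarith
      · rw [hy, pow_succ]; ring

/-- For every `k ≥ 2`, the preimage of `[0,1/2]` under `τ_{(2,k)}` (within the domain
`[0,1]`) is the interval `[0, Σ_{i=1}^k 2^{-i}] = [0, 1 − 2^{-k}]`. -/
theorem preimage_comp2_Icc_half (k : ℕ) (hk : 2 ≤ k) :
    (∑ i ∈ Finset.Icc 1 k, (1 / 2 : ℝ) ^ i) = 1 - (1 / 2 : ℝ) ^ k ∧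
    comp2 k ⁻¹' Set.Icc (0 : ℝ) (1 / 2) ∩ Set.Icc 0 1
      = Set.Icc (0 : ℝ) (∑ i ∈ Finset.Icc 1 k, (1 / 2 : ℝ) ^ i) := by
  refine ⟨sum_geom_half k, ?_⟩
  rw [sum_geom_half k]
  ext x
  simp only [Set.mem_inter_iff, Set.mem_preimage, Set.mem_Icc]
  have hq : (0 : ℝ) < (1 / 2 : ℝ) ^ k := by positivity
  have hp : (0 : ℝ) < (2 : ℝ) ^ k := by positivity
  constructor
  · rintro ⟨⟨h0, h1⟩, hx0, hx1⟩
    refine ⟨hx0, ?_⟩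
    by_contra hgt
    push_neg at hgt
    have hy := ((comp2_key k hk x hx0 hx1).2) hgt
    rw [hy] at h1
    nlinarith [(by rw [← mul_pow]; norm_num : (2 : ℝ) ^ k * (1 / 2 : ℝ) ^ k = 1)]
  · rintro ⟨h0, h1⟩
    have hx1 : x ≤ 1 := by linarith
    have := ((comp2_key k hk x h0 hx1).1) h1
    exact ⟨this, h0, hx1⟩
end

section
/- Let q ≥ 1 and s > 0, and let τ_n : [0,1] → [0,1] be a sequence of maps converging uniformly to τ : [0,1] → [0,1]. Assume each τ_n is piecewise monotone with at most q branches, and on each branch τ_n expands distances by factor at least s: |τ_n(x) − τ_n(y)| ≥ s|x − y| whenever x, y lie in the same interval of monotonicity of τ_n. Then for every interval J ⊆ [0,1], the Lebesgue measure of the preimage satisfies m(τ^{-1}(J)) ≤ (q/s)·m(J). -/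
open MeasureTheory Filter Topology
open scoped ENNReal

/-- `T : [0,1] → [0,1]` is piecewise monotone with at most `q` branches, expanding
distances by at least `s` on each branch: there is a partition
`0 = a_0 < a_1 < ⋯ < a_r = 1`, `r ≤ q`, such that `T` is strictly monotone on each
open interval `(a_{i-1}, a_i)` and `|T x − T y| ≥ s|x − y|` there. -/
def PiecewiseMonotoneExpanding (T : ℝ → ℝ) (q : ℕ) (s : ℝ) : Prop :=
  ∃ (r : ℕ) (a : ℕ → ℝ), 0 < r ∧ r ≤ q ∧ a 0 = 0 ∧ a r = 1 ∧
    (∀ i < r, a i < a (i + 1)) ∧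
    (∀ i < r, StrictMonoOn T (Set.Ioo (a i) (a (i + 1))) ∨
      StrictAntiOn T (Set.Ioo (a i) (a (i + 1)))) ∧
    ∀ i < r, ∀ x ∈ Set.Ioo (a i) (a (i + 1)), ∀ y ∈ Set.Ioo (a i) (a (i + 1)),
      s * |x - y| ≤ |T x - T y|

/-- A point between the endpoints of a partition lies in some subinterval. -/
lemma exists_mem_Icc_of_partition : ∀ (r : ℕ) (a : ℕ → ℝ) (x : ℝ), 0 < r → a 0 ≤ x → x ≤ a r →
    ∃ i < r, a i ≤ x ∧ x ≤ a (i + 1)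
  | 0, _, _, h, _, _ => absurd h (lt_irrefl 0)
  | (k+1), a, x, _, h0, h1 => by
    by_cases hk : a k ≤ x
    · exact ⟨k, Nat.lt_succ_self k, hk, h1⟩
    · rcases Nat.eq_zero_or_pos k with rfl | hkpos
      · exact absurd h0 hk
      · obtain ⟨i, hi, h⟩ := exists_mem_Icc_of_partition k a x hkpos h0 (le_of_not_ge hk)
        exact ⟨i, hi.trans (Nat.lt_succ_self k), h⟩

/-- Key quantitative estimate for a single piecewise monotone expanding map. -/
lemma volume_preimage_Icc_le (T : ℝ → ℝ) (q : ℕ) (s : ℝ) (hs : 0 < s)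
    (h : PiecewiseMonotoneExpanding T q s) (c d : ℝ) :
    volume (T ⁻¹' Set.Icc c d ∩ Set.Icc (0:ℝ) 1) ≤
      (q : ℝ≥0∞) * ENNReal.ofReal ((d - c) / s) := by
  obtain ⟨r, a, hr0, hrq, ha0, har, hgap, -, hexp⟩ := h
  -- the per-branch sets
  set S : ℕ → Set ℝ := fun i => Set.Ioo (a i) (a (i+1)) ∩ T ⁻¹' Set.Icc c d with hS
  have hcover : T ⁻¹' Set.Icc c d ∩ Set.Icc (0:ℝ) 1 ⊆
      (⋃ i ∈ Finset.range r, S i) ∪ (⋃ i ∈ Finset.range (r+1), {a i}) := by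
    rintro x ⟨hxT, hx0, hx1⟩
    obtain ⟨i, hi, hxl, hxr⟩ := exists_mem_Icc_of_partition r a x hr0
      (by rw [ha0]; exact hx0) (by rw [har]; exact hx1)
    rcases eq_or_lt_of_le hxl with rfl | hxl'
    · exact Or.inr (Set.mem_biUnion (Finset.mem_range.2 (hi.trans (Nat.lt_succ_self r))) rfl)
    rcases eq_or_lt_of_le hxr with rfl | hxr'
    · exact Or.inr (Set.mem_biUnion (Finset.mem_range.2 (Nat.succ_lt_succ hi)) rfl)
    · exact Or.inl (Set.mem_biUnion (Finset.mem_range.2 hi) ⟨⟨hxl', hxr'⟩, hxT⟩)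
  have hpts : volume (⋃ i ∈ Finset.range (r+1), ({a i} : Set ℝ)) = 0 := by
    refine measure_biUnion_null_iff (Finset.countable_toSet _) |>.2 fun i _ => ?_
    exact measure_singleton _
  have hbranch : ∀ i ∈ Finset.range r, volume (S i) ≤ ENNReal.ofReal ((d - c) / s) := by
    intro i hi
    rw [Finset.mem_range] at hi
    refine (Real.volume_le_diam _).trans (EMetric.diam_le ?_)
    rintro x ⟨hx, hxT⟩ y ⟨hy, hyT⟩
    rw [edist_dist]
    refine ENNReal.ofReal_le_ofReal ?_
    rw [Real.dist_eq, le_div_iff₀ hs, mul_comm]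
    calc s * |x - y| ≤ |T x - T y| := hexp i hi x hx y hy
      _ ≤ d - c := by
        have := Real.dist_le_of_mem_Icc (x := T x) (y := T y) hxT hyT
        rwa [Real.dist_eq] at this
  calc volume (T ⁻¹' Set.Icc c d ∩ Set.Icc (0:ℝ) 1)
      ≤ volume ((⋃ i ∈ Finset.range r, S i) ∪ (⋃ i ∈ Finset.range (r+1), {a i})) :=
        measure_mono hcover
    _ ≤ volume (⋃ i ∈ Finset.range r, S i) + volume (⋃ i ∈ Finset.range (r+1), ({a i} : Set ℝ)) :=
        measure_union_le _ _
    _ = volume (⋃ i ∈ Finset.range r, S i) := by rw [hpts, add_zero]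
    _ ≤ ∑ i ∈ Finset.range r, volume (S i) := measure_biUnion_finset_le _ _
    _ ≤ ∑ _i ∈ Finset.range r, ENNReal.ofReal ((d - c) / s) := Finset.sum_le_sum hbranch
    _ = (r : ℝ≥0∞) * ENNReal.ofReal ((d - c) / s) := by
        rw [Finset.sum_const, Finset.card_range, nsmul_eq_mul]
    _ ≤ (q : ℝ≥0∞) * ENNReal.ofReal ((d - c) / s) :=
        mul_le_mul_left (by exact_mod_cast hrq) _

/-- If `τ_n ⇉ τ` on `[0,1]` and each `τ_n` is piecewise monotone with at most `q`
branches, expanding by at least `s` on each branch, then `m(τ^{-1}(J)) ≤ (q/s)·m(J)`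
for every interval `J ⊆ [0,1]`. -/
theorem measure_preimage_interval_le (q : ℕ) (hq : 1 ≤ q) (s : ℝ) (hs : 0 < s)
    (τseq : ℕ → ℝ → ℝ) (τ : ℝ → ℝ)
    (hmaps : ∀ n, Set.MapsTo (τseq n) (Set.Icc 0 1) (Set.Icc 0 1))
    (hτmaps : Set.MapsTo τ (Set.Icc 0 1) (Set.Icc 0 1))
    (hconv : TendstoUniformlyOn τseq τ atTop (Set.Icc 0 1))
    (hpm : ∀ n, PiecewiseMonotoneExpanding (τseq n) q s) :
    ∀ J : Set ℝ, J ⊆ Set.Icc 0 1 → J.OrdConnected →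
      m (τ ⁻¹' J) ≤ ENNReal.ofReal ((q : ℝ) / s) * m J := by
  intro J hJsub hJconn
  rcases J.eq_empty_or_nonempty with rfl | hne
  · simp [m]
  have hbdd : BddAbove J := ⟨1, fun x hx => (hJsub hx).2⟩
  have hbddb : BddBelow J := ⟨0, fun x hx => (hJsub hx).1⟩
  set c := sInf J with hc
  set d := sSup J with hd
  have hcd : c ≤ d := Real.sInf_le_sSup J hbddb hbdd |>.trans_eq rfl
  have hJIcc : J ⊆ Set.Icc c d := fun x hx =>
    ⟨csInf_le hbddb hx, le_csSup hbdd hx⟩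
  -- `Ioo c d ⊆ J`, hence `ofReal (d - c) ≤ volume J`
  have hIoo : Set.Ioo c d ⊆ J := by
    intro x hx
    obtain ⟨y, hy, hyx⟩ := exists_lt_of_csInf_lt hne hx.1
    obtain ⟨z, hz, hxz⟩ := exists_lt_of_lt_csSup hne hx.2
    exact hJconn.out hy hz ⟨hyx.le, hxz.le⟩
  have hvolJ : ENNReal.ofReal (d - c) ≤ volume J := by
    calc ENNReal.ofReal (d - c) = volume (Set.Ioo c d) := (Real.volume_Ioo).symm
      _ ≤ volume J := measure_mono hIoo
  have hmJ : ENNReal.ofReal (d - c) ≤ m J := by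
    rw [m, Measure.restrict_apply' measurableSet_Icc,
      Set.inter_eq_self_of_subset_left hJsub]
    exact hvolJ
  -- main estimate, up to ε
  refine ENNReal.le_of_forall_pos_le_add fun ε hε _ => ?_
  set δ : ℝ := (ε : ℝ) * s / (2 * q) with hδ
  have hq' : (0:ℝ) < q := by exact_mod_cast hq
  have hδpos : 0 < δ := by positivity
  obtain ⟨n, hn⟩ := (Metric.tendstoUniformlyOn_iff.1 hconv δ hδpos).exists
  have hsub : τ ⁻¹' J ∩ Set.Icc (0:ℝ) 1 ⊆
      τseq n ⁻¹' Set.Icc (c - δ) (d + δ) ∩ Set.Icc (0:ℝ) 1 := by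
    rintro x ⟨hxJ, hx01⟩
    have hτx := hJIcc hxJ
    have hdist := hn x hx01
    rw [Real.dist_eq] at hdist
    have h1 : τ x - δ ≤ τseq n x := by cases abs_sub_lt_iff.1 hdist; linarith
    have h2 : τseq n x ≤ τ x + δ := by cases abs_sub_lt_iff.1 hdist; linarith
    exact ⟨⟨by linarith [hτx.1], by linarith [hτx.2]⟩, hx01⟩
  have key : m (τ ⁻¹' J) ≤ (q : ℝ≥0∞) * ENNReal.ofReal ((d + δ - (c - δ)) / s) := by
    rw [m, Measure.restrict_apply' measurableSet_Icc]
    exact (measure_mono hsub).trans (volume_preimage_Icc_le (τseq n) q s hs (hpm n) _ _)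
  refine key.trans ?_
  have harith : (q : ℝ≥0∞) * ENNReal.ofReal ((d + δ - (c - δ)) / s) =
      ENNReal.ofReal ((q : ℝ) / s) * ENNReal.ofReal (d - c) +
        ENNReal.ofReal ((q : ℝ) / s * (2 * δ)) := by
    rw [← ENNReal.ofReal_natCast, ← ENNReal.ofReal_mul (by positivity),
      ← ENNReal.ofReal_mul (by positivity : (0:ℝ) ≤ (q:ℝ)/s), ← ENNReal.ofReal_add]
    · congr 1; field_simp; ring
    · exact mul_nonneg (by positivity) (by linarith)
    · positivity
  rw [harith]
  have hδeq : (q : ℝ) / s * (2 * δ) = (ε : ℝ) := by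
    rw [hδ]; field_simp
  rw [hδeq, ENNReal.ofReal_coe_nnreal]
  gcongr
end

section
/- Let q ≥ 1 and s > 0, and let τ_n : [0,1] → [0,1] be a sequence of maps converging uniformly to a Borel measurable map τ : [0,1] → [0,1]. Assume each τ_n is piecewise monotone with at most q branches and expands distances by factor at least s on each branch. Then τ is nonsingular with respect to Lebesgue measure: for every Borel set A ⊆ [0,1] with m(A) = 0 one has m(τ^{-1}(A)) = 0; moreover m(τ^{-1}(A)) ≤ (q/s)·m(A) for every Borel set A. -/
open MeasureTheory Filter Topology
open scoped ENNReal

/-- Expansion bound on one branch: the preimage of any set within one branch interval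
has measure at most `(1/s)` times the measure of the set. -/
lemma branch_preimage_bound (T : ℝ → ℝ) {s a b : ℝ} (hs : 0 < s)
    (hexp : ∀ x ∈ Set.Ioo a b, ∀ y ∈ Set.Ioo a b, s * |x - y| ≤ |T x - T y|)
    (A : Set ℝ) :
    volume (Set.Ioo a b ∩ T ⁻¹' A) ≤ ENNReal.ofReal (1 / s) * volume A := by
  have hinj : Set.InjOn T (Set.Ioo a b) := by
    intro x hx y hy hxy
    by_contra h
    have h1 := hexp x hx y hy
    rw [hxy, sub_self, abs_zero] at h1
    have : 0 < |x - y| := abs_pos.2 (sub_ne_zero.2 h)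
    nlinarith
  set g : ℝ → ℝ := Function.invFunOn T (Set.Ioo a b) with hg
  have himg : Set.Ioo a b ∩ T ⁻¹' A = g '' (A ∩ T '' Set.Ioo a b) := by
    ext x
    constructor
    · rintro ⟨hx, hxA⟩
      exact ⟨T x, ⟨hxA, Set.mem_image_of_mem _ hx⟩, hinj.leftInvOn_invFunOn hx⟩
    · rintro ⟨u, ⟨huA, hu⟩, rfl⟩
      refine ⟨Function.invFunOn_mem ?_, ?_⟩
      · obtain ⟨x, hx, rfl⟩ := hu
        exact ⟨x, hx, rfl⟩
      · obtain ⟨x, hx, rfl⟩ := hu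
        have : T (g (T x)) = T x := Function.invFunOn_eq ⟨x, hx, rfl⟩
        simpa [Set.mem_preimage, this] using huA
  have hlip : LipschitzOnWith (Real.toNNReal (1 / s)) g (T '' Set.Ioo a b) := by
    rw [lipschitzOnWith_iff_dist_le_mul]
    rintro u ⟨x, hx, rfl⟩ v ⟨y, hy, rfl⟩
    have e1 : g (T x) = x := hinj.leftInvOn_invFunOn hx
    have e2 : g (T y) = y := hinj.leftInvOn_invFunOn hy
    rw [e1, e2]
    have h1 := hexp x hx y hy
    rw [Real.dist_eq, Real.dist_eq, Real.coe_toNNReal _ (by positivity)]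
    rw [div_mul_eq_mul_div, one_mul, le_div_iff₀ hs, mul_comm]
    exact h1
  calc volume (Set.Ioo a b ∩ T ⁻¹' A)
      = μH[1] (g '' (A ∩ T '' Set.Ioo a b)) := by
        rw [himg, MeasureTheory.hausdorffMeasure_real]
    _ ≤ ((Real.toNNReal (1 / s) : ℝ≥0∞)) ^ (1 : ℝ) * μH[1] (A ∩ T '' Set.Ioo a b) :=
        (hlip.mono Set.inter_subset_right).hausdorffMeasure_image_le zero_le_one
    _ ≤ ENNReal.ofReal (1 / s) * volume A := by
        rw [ENNReal.rpow_one, MeasureTheory.hausdorffMeasure_real]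
        exact mul_le_mul_right (measure_mono Set.inter_subset_left) _

lemma exists_branch_index (a : ℕ → ℝ) (r : ℕ) (hr : 0 < r) (x : ℝ)
    (h1 : a 0 ≤ x) (h2 : x ≤ a r) : ∃ i < r, x ∈ Set.Icc (a i) (a (i + 1)) := by
  induction r with
  | zero => omega
  | succ k ih =>
    rcases Nat.eq_zero_or_pos k with hk | hk
    · subst hk; exact ⟨0, by omega, h1, h2⟩
    · by_cases hx : x ≤ a k
      · obtain ⟨i, hi, hmem⟩ := ih hk hx
        exact ⟨i, by omega, hmem⟩
      · exact ⟨k, by omega, le_of_not_ge hx, h2⟩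

/-- A piecewise monotone expanding map contracts measure by at most `q/s` on `[0,1]`. -/
lemma pme_preimage_bound (T : ℝ → ℝ) {q : ℕ} {s : ℝ} (hs : 0 < s)
    (h : PiecewiseMonotoneExpanding T q s) (A : Set ℝ) :
    volume (T ⁻¹' A ∩ Set.Icc 0 1) ≤ ENNReal.ofReal ((q : ℝ) / s) * volume A := by
  obtain ⟨r, a, hr, hrq, ha0, har, hlt, -, hexp⟩ := h
  have hcover : T ⁻¹' A ∩ Set.Icc 0 1 ⊆
      (⋃ i ∈ Finset.range r, Set.Ioo (a i) (a (i + 1)) ∩ T ⁻¹' A) ∪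
      (⋃ i ∈ Finset.range (r + 1), {a i}) := by
    rintro x ⟨hxA, hx01⟩
    obtain ⟨i, hi, hxi⟩ := exists_branch_index a r hr x (ha0 ▸ hx01.1) (har ▸ hx01.2)
    rcases eq_or_lt_of_le hxi.1 with he | h1
    · exact Or.inr (Set.mem_biUnion (Finset.mem_range.2 (by omega)) he.symm)
    rcases eq_or_lt_of_le hxi.2 with he | h2
    · exact Or.inr (Set.mem_biUnion (Finset.mem_range.2 (by omega)) he)
    · exact Or.inl (Set.mem_biUnion (Finset.mem_range.2 hi) ⟨⟨h1, h2⟩, hxA⟩)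
  calc volume (T ⁻¹' A ∩ Set.Icc 0 1)
      ≤ volume ((⋃ i ∈ Finset.range r, Set.Ioo (a i) (a (i + 1)) ∩ T ⁻¹' A)) +
        volume (⋃ i ∈ Finset.range (r + 1), ({a i} : Set ℝ)) :=
        le_trans (measure_mono hcover) (measure_union_le _ _)
    _ ≤ (∑ i ∈ Finset.range r, volume (Set.Ioo (a i) (a (i + 1)) ∩ T ⁻¹' A)) + 0 := by
        gcongr
        · exact measure_biUnion_finset_le _ _
        · refine le_trans (measure_biUnion_finset_le _ _) ?_
          simp
    _ ≤ (∑ _i ∈ Finset.range r, ENNReal.ofReal (1 / s) * volume A) + 0 := by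
        gcongr with i hi
        exact branch_preimage_bound T hs (hexp i (Finset.mem_range.1 hi)) A
    _ = (r : ℝ≥0∞) * (ENNReal.ofReal (1 / s) * volume A) := by
        simp [Finset.sum_const, nsmul_eq_mul]
    _ ≤ (q : ℝ≥0∞) * (ENNReal.ofReal (1 / s) * volume A) := by
        have hrq' : (r : ℝ≥0∞) ≤ q := by exact_mod_cast hrq
        exact mul_le_mul_left hrq' _
    _ = ENNReal.ofReal ((q : ℝ) / s) * volume A := by
        rw [← mul_assoc, ← ENNReal.ofReal_natCast q, ← ENNReal.ofReal_mul (by positivity),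
          mul_one_div]

/-- If `τ_n ⇉ τ` on `[0,1]`, `τ` Borel, and each `τ_n` is piecewise monotone with at
most `q` branches expanding by at least `s`, then `τ` is nonsingular with respect to
Lebesgue measure and moreover `m(τ^{-1}(A)) ≤ (q/s)·m(A)` for every Borel `A`. -/
theorem limit_map_nonsingular (q : ℕ) (hq : 1 ≤ q) (s : ℝ) (hs : 0 < s)
    (τseq : ℕ → ℝ → ℝ) (τ : ℝ → ℝ) (hτmeas : Measurable τ)
    (hmaps : ∀ n, Set.MapsTo (τseq n) (Set.Icc 0 1) (Set.Icc 0 1))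
    (hτmaps : Set.MapsTo τ (Set.Icc 0 1) (Set.Icc 0 1))
    (hconv : TendstoUniformlyOn τseq τ atTop (Set.Icc 0 1))
    (hpm : ∀ n, PiecewiseMonotoneExpanding (τseq n) q s) :
    (∀ A : Set ℝ, MeasurableSet A → m A = 0 → m (τ ⁻¹' A) = 0) ∧
    ∀ A : Set ℝ, MeasurableSet A → m (τ ⁻¹' A) ≤ ENNReal.ofReal ((q : ℝ) / s) * m A := by
  set c : ℝ≥0∞ := ENNReal.ofReal ((q : ℝ) / s) with hc
  have hq0 : (0 : ℝ) < (q : ℝ) / s := by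
    have : (0:ℝ) < q := by exact_mod_cast hq
    positivity
  have hc0 : c ≠ 0 := by simp [hc, ENNReal.ofReal_eq_zero, not_le, hq0]
  have hcT : c ≠ ∞ := ENNReal.ofReal_ne_top
  have hm1 : ∀ X : Set ℝ, m X = volume (X ∩ Set.Icc 0 1) := fun X =>
    Measure.restrict_apply' measurableSet_Icc
  have hfin : ∀ X : Set ℝ, m X ≠ ∞ := by
    intro X
    rw [hm1]
    exact ne_top_of_le_ne_top (by simp [Real.volume_Icc]) (measure_mono Set.inter_subset_right)
  -- Step 1: the bound for closed sets.
  have hclosed : ∀ F : Set ℝ, IsClosed F → m (τ ⁻¹' F) ≤ c * m F := by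
    intro F hF
    have key : ∀ ε : ℝ, 0 < ε → m (τ ⁻¹' F) ≤ c * m (Metric.thickening ε F) := by
      intro ε hε
      obtain ⟨n, hn⟩ := (Metric.tendstoUniformlyOn_iff.1 hconv ε hε).exists
      have hsub : τ ⁻¹' F ∩ Set.Icc 0 1 ⊆
          (τseq n) ⁻¹' (Metric.thickening ε F ∩ Set.Icc 0 1) ∩ Set.Icc 0 1 := by
        rintro x ⟨hxF, hx01⟩
        refine ⟨⟨?_, hmaps n hx01⟩, hx01⟩
        exact Metric.mem_thickening_iff.2 ⟨τ x, hxF, by simpa [dist_comm] using hn x hx01⟩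
      calc m (τ ⁻¹' F) = volume (τ ⁻¹' F ∩ Set.Icc 0 1) := hm1 _
        _ ≤ volume ((τseq n) ⁻¹' (Metric.thickening ε F ∩ Set.Icc 0 1) ∩ Set.Icc 0 1) :=
            measure_mono hsub
        _ ≤ c * volume (Metric.thickening ε F ∩ Set.Icc 0 1) :=
            pme_preimage_bound _ hs (hpm n) _
        _ = c * m (Metric.thickening ε F) := by rw [hm1]
    have hthick : Tendsto (fun ε => m (Metric.thickening ε F)) (𝓝[>] 0) (𝓝 (m F)) :=
      tendsto_measure_thickening_of_isClosed ⟨1, one_pos, hfin _⟩ hF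
    have hthick' : Tendsto (fun ε => c * m (Metric.thickening ε F)) (𝓝[>] 0)
        (𝓝 (c * m F)) := ENNReal.Tendsto.const_mul hthick (Or.inr hcT)
    exact ge_of_tendsto hthick' (eventually_nhdsWithin_of_forall fun ε hε => key ε hε)
  -- Step 2: the bound for open sets.
  have hopen : ∀ U : Set ℝ, IsOpen U → m (τ ⁻¹' U) ≤ c * m U := by
    intro U hU
    set F : ℕ → Set ℝ := fun k => {x : ℝ | ∀ y ∈ Uᶜ, 1 / ((k : ℝ) + 1) ≤ dist x y} with hF
    have hFclosed : ∀ k, IsClosed (F k) := by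
      intro k
      have : F k = ⋂ y ∈ Uᶜ, {x : ℝ | 1 / ((k : ℝ) + 1) ≤ dist x y} := by
        ext x; simp [hF, Set.mem_iInter]
      rw [this]
      exact isClosed_biInter fun y _ =>
        isClosed_le continuous_const (continuous_id.dist continuous_const)
    have hFmono : Monotone F := by
      intro k l hkl x hx y hy
      refine le_trans (one_div_le_one_div_of_le (by positivity) ?_) (hx y hy)
      have : (k : ℝ) ≤ l := by exact_mod_cast hkl
      linarith
    have hFsubU : ∀ k, F k ⊆ U := by
      intro k x hx
      by_contra hxU
      have := hx x hxU
      simp at this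
      have : (0:ℝ) < 1 / ((k:ℝ)+1) := by positivity
      linarith [hx x hxU, dist_self x]
    have hFU : (⋃ k, F k) = U := by
      apply Set.Subset.antisymm (Set.iUnion_subset hFsubU)
      intro x hx
      obtain ⟨ε, hε, hball⟩ := Metric.isOpen_iff.1 hU x hx
      obtain ⟨n, hn⟩ := exists_nat_one_div_lt hε
      refine Set.mem_iUnion.2 ⟨n, fun y hy => ?_⟩
      by_contra hlt
      push_neg at hlt
      exact hy (hball (by rw [Metric.mem_ball, dist_comm]; linarith))
    have hmono' : Monotone fun k => τ ⁻¹' F k := fun k l h => Set.preimage_mono (hFmono h)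
    have hlim : Tendsto (fun k => m (τ ⁻¹' F k)) atTop (𝓝 (m (τ ⁻¹' U))) := by
      have := tendsto_measure_iUnion_atTop (μ := m) hmono'
      rwa [← Set.preimage_iUnion, hFU] at this
    refine le_of_tendsto hlim (Filter.Eventually.of_forall fun k => ?_)
    exact le_trans (hclosed (F k) (hFclosed k))
      (mul_le_mul_right (measure_mono (hFsubU k)) _)
  -- Step 3: the bound for all measurable sets, by outer regularity.
  have hmain : ∀ A : Set ℝ, MeasurableSet A → m (τ ⁻¹' A) ≤ c * m A := by
    intro A hA
    apply ENNReal.le_of_forall_pos_le_add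
    intro ε hε hlt
    have hεc : (ε : ℝ≥0∞) / c ≠ 0 := by
      simp [ENNReal.div_eq_zero_iff, hcT, hε.ne']
    obtain ⟨U, hAU, hUopen, hUle⟩ :=
      Set.exists_isOpen_le_add (A ∩ Set.Icc 0 1) volume hεc
    have hpre : τ ⁻¹' A ∩ Set.Icc 0 1 = τ ⁻¹' (A ∩ Set.Icc 0 1) ∩ Set.Icc 0 1 := by
      ext x
      constructor
      · rintro ⟨hxA, hx01⟩
        exact ⟨⟨hxA, hτmaps hx01⟩, hx01⟩
      · rintro ⟨⟨hxA, -⟩, hx01⟩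
        exact ⟨hxA, hx01⟩
    calc m (τ ⁻¹' A) = volume (τ ⁻¹' A ∩ Set.Icc 0 1) := hm1 _
      _ = volume (τ ⁻¹' (A ∩ Set.Icc 0 1) ∩ Set.Icc 0 1) := by rw [hpre]
      _ = m (τ ⁻¹' (A ∩ Set.Icc 0 1)) := (hm1 _).symm
      _ ≤ m (τ ⁻¹' U) := measure_mono (Set.preimage_mono hAU)
      _ ≤ c * m U := hopen U hUopen
      _ ≤ c * volume U := by
          refine mul_le_mul_right ?_ _
          rw [hm1]
          exact measure_mono Set.inter_subset_left
      _ ≤ c * (volume (A ∩ Set.Icc 0 1) + (ε : ℝ≥0∞) / c) := mul_le_mul_right hUle _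
      _ = c * (m A + (ε : ℝ≥0∞) / c) := by rw [hm1]
      _ = c * m A + c * ((ε : ℝ≥0∞) / c) := mul_add _ _ _
      _ ≤ c * m A + ε := by
          refine add_le_add_right ?_ _
          rw [ENNReal.mul_div_cancel hc0 hcT]
  exact ⟨fun A hA hA0 => le_antisymm (by simpa [hA0] using hmain A hA) zero_le,
    hmain⟩
end

section
/- Let τ_n, τ : [0,1] → [0,1] be Borel measurable maps with τ_n converging uniformly to τ, and suppose there is a constant K such that m(τ^{-1}(A)) ≤ K·m(A) and m(τ_n^{-1}(A)) ≤ K·m(A) for every Borel set A and every n. Then for every F ∈ L¹([0,1], m) and every g ∈ L^∞([0,1], m), ∫₀¹ F·(g ∘ τ_n − g ∘ τ) dm → 0 as n → ∞. Equivalently, P_{τ_n} F − P_τ F → 0 weakly in L¹, where P_T F denotes the Frobenius–Perron operator (the Radon–Nikodym derivative of T_*(F·m) with respect to m). -/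
open MeasureTheory Filter Topology
open scoped ENNReal

lemma m_univ : m Set.univ = 1 := by
  simp [m, Measure.restrict_apply_univ]

instance : IsFiniteMeasure m := ⟨by rw [m_univ]; exact ENNReal.one_lt_top⟩

lemma m_regular : m.Regular :=
  Measure.Regular.restrict_of_measure_ne_top (by simp)

lemma lintegral_comp_le {T : ℝ → ℝ} (hT : Measurable T) (K : ℝ)
    (hKT : ∀ A, MeasurableSet A → m (T ⁻¹' A) ≤ ENNReal.ofReal K * m A)
    {φ : ℝ → ℝ≥0∞} (hφ : Measurable φ) :
    ∫⁻ x, φ (T x) ∂m ≤ ENNReal.ofReal K * ∫⁻ x, φ x ∂m := by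
  have hmap : Measure.map T m ≤ ENNReal.ofReal K • m := by
    rw [Measure.le_iff]
    intro s hs
    rw [Measure.map_apply hT hs]
    simpa using hKT s hs
  calc ∫⁻ x, φ (T x) ∂m = ∫⁻ y, φ y ∂(Measure.map T m) := (lintegral_map hφ hT).symm
    _ ≤ ∫⁻ y, φ y ∂(ENNReal.ofReal K • m) := lintegral_mono' hmap le_rfl
    _ = ENNReal.ofReal K * ∫⁻ x, φ x ∂m := lintegral_smul_measure _ _

/-- If `τ_n ⇉ τ` on `[0,1]` and the preimage measures of all the maps are uniformly
dominated, `m(τ_n^{-1}(A)) ≤ K·m(A)` and `m(τ^{-1}(A)) ≤ K·m(A)`, then for every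
`F ∈ L¹` and `g ∈ L^∞`, `∫ F·(g ∘ τ_n − g ∘ τ) dm → 0`; i.e.
`P_{τ_n} F − P_τ F → 0` weakly in `L¹`. -/
theorem integral_mul_comp_sub_tendsto_zero
    (τseq : ℕ → ℝ → ℝ) (τ : ℝ → ℝ)
    (hmeas : ∀ n, Measurable (τseq n)) (hτmeas : Measurable τ)
    (hmaps : ∀ n, Set.MapsTo (τseq n) (Set.Icc 0 1) (Set.Icc 0 1))
    (hτmaps : Set.MapsTo τ (Set.Icc 0 1) (Set.Icc 0 1))
    (hconv : TendstoUniformlyOn τseq τ atTop (Set.Icc 0 1))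
    (K : ℝ)
    (hK : ∀ A : Set ℝ, MeasurableSet A → m (τ ⁻¹' A) ≤ ENNReal.ofReal K * m A)
    (hKn : ∀ n, ∀ A : Set ℝ, MeasurableSet A →
      m (τseq n ⁻¹' A) ≤ ENNReal.ofReal K * m A)
    (F : ℝ → ℝ) (hF : Integrable F m)
    (g : ℝ → ℝ) (hg : Measurable g) (C : ℝ) (hgb : ∀ x, |g x| ≤ C) :
    Tendsto (fun n => ∫ x, F x * (g (τseq n x) - g (τ x)) ∂m) atTop (𝓝 0) := by
  haveI := m_regular
  have hC0 : 0 ≤ C := le_trans (abs_nonneg _) (hgb 0)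
  have hK1 : (1 : ℝ≥0∞) ≤ ENNReal.ofReal K := by
    have := hK Set.univ MeasurableSet.univ
    simpa [m_univ] using this
  have hK0 : 0 ≤ K := by
    by_contra hc
    push_neg at hc
    rw [ENNReal.ofReal_eq_zero.2 hc.le] at hK1
    simp at hK1
  have hgi : Integrable g m :=
    (integrable_const C).mono' hg.aestronglyMeasurable
      (Eventually.of_forall fun x => by simpa [Real.norm_eq_abs] using hgb x)
  rw [NormedAddCommGroup.tendsto_nhds_zero]
  intro ε hε
  -- approximation of F by a continuous compactly supported function
  have hδ₁ : (0:ℝ) < ε / (4 * (2 * C + 1)) := by positivity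
  set δ₁ : ℝ := ε / (4 * (2 * C + 1)) with hδ₁def
  obtain ⟨Fb, Fb_supp, hFb1, Fb_cont, -⟩ :=
    hF.exists_hasCompactSupport_lintegral_sub_le
      (ε := ENNReal.ofReal δ₁) (ENNReal.ofReal_pos.2 hδ₁).ne'
  obtain ⟨M0, hM0⟩ := Fb_supp.exists_bound_of_continuous Fb_cont
  set M : ℝ := |M0| + 1 with hMdef
  have hM0' : 0 < M := by positivity
  have hMb : ∀ x, ‖Fb x‖ ≤ M := fun x =>
    (hM0 x).trans (by simp [hMdef]; linarith [le_abs_self M0])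
  -- approximation of g
  have hδ₂ : (0:ℝ) < ε / (8 * M * (K + 1)) := by positivity
  set δ₂ : ℝ := ε / (8 * M * (K + 1)) with hδ₂def
  obtain ⟨h, h_supp, hh1, h_cont, -⟩ :=
    hgi.exists_hasCompactSupport_lintegral_sub_le
      (ε := ENNReal.ofReal δ₂) (ENNReal.ofReal_pos.2 hδ₂).ne'
  -- uniform continuity of h
  have hδ₃ : (0:ℝ) < ε / (4 * M) := by positivity
  set δ₃ : ℝ := ε / (4 * M) with hδ₃def
  obtain ⟨δ, hδpos, hδ⟩ := Metric.uniformContinuous_iff.1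
    (h_supp.uniformContinuous_of_continuous h_cont) δ₃ hδ₃
  filter_upwards [Metric.tendstoUniformlyOn_iff.1 hconv δ hδpos] with n hn
  have hae : ∀ᵐ x ∂m, x ∈ Set.Icc (0:ℝ) 1 := by
    unfold m; exact ae_restrict_mem measurableSet_Icc
  -- pointwise bound
  have hpt : ∀ x, ENNReal.ofReal ‖F x * (g (τseq n x) - g (τ x))‖ ≤
      ENNReal.ofReal (‖F x - Fb x‖ * (2 * C))
      + (ENNReal.ofReal (M * ‖g (τseq n x) - h (τseq n x)‖)
      + (ENNReal.ofReal (M * ‖h (τseq n x) - h (τ x)‖)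
      + ENNReal.ofReal (M * ‖h (τ x) - g (τ x)‖))) := by
    intro x
    rw [← ENNReal.ofReal_add (by positivity) (by positivity),
        ← ENNReal.ofReal_add (by positivity) (by positivity),
        ← ENNReal.ofReal_add (by positivity) (by positivity)]
    apply ENNReal.ofReal_le_ofReal
    have h1 : ‖g (τseq n x) - g (τ x)‖ ≤ 2 * C := by
      rw [Real.norm_eq_abs]
      calc |g (τseq n x) - g (τ x)| ≤ |g (τseq n x)| + |g (τ x)| := abs_sub _ _
        _ ≤ 2 * C := by linarith [hgb (τseq n x), hgb (τ x)]
    have h2 : ‖F x‖ ≤ ‖F x - Fb x‖ + M := by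
      calc ‖F x‖ = ‖(F x - Fb x) + Fb x‖ := by ring_nf
        _ ≤ ‖F x - Fb x‖ + ‖Fb x‖ := norm_add_le _ _
        _ ≤ ‖F x - Fb x‖ + M := by linarith [hMb x]
    have h3 : ‖g (τseq n x) - g (τ x)‖ ≤
        ‖g (τseq n x) - h (τseq n x)‖ + ‖h (τseq n x) - h (τ x)‖
        + ‖h (τ x) - g (τ x)‖ := by
      calc ‖g (τseq n x) - g (τ x)‖
          ≤ ‖g (τseq n x) - h (τseq n x)‖ + ‖h (τseq n x) - g (τ x)‖ :=
            norm_sub_le_norm_sub_add_norm_sub _ _ _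
        _ ≤ ‖g (τseq n x) - h (τseq n x)‖ + (‖h (τseq n x) - h (τ x)‖
            + ‖h (τ x) - g (τ x)‖) := by
            gcongr
            exact norm_sub_le_norm_sub_add_norm_sub _ _ _
        _ = _ := by ring
    calc ‖F x * (g (τseq n x) - g (τ x))‖
        = ‖F x‖ * ‖g (τseq n x) - g (τ x)‖ := norm_mul _ _
      _ ≤ (‖F x - Fb x‖ + M) * ‖g (τseq n x) - g (τ x)‖ := by gcongr
      _ = ‖F x - Fb x‖ * ‖g (τseq n x) - g (τ x)‖
          + M * ‖g (τseq n x) - g (τ x)‖ := by ring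
      _ ≤ ‖F x - Fb x‖ * (2 * C)
          + M * (‖g (τseq n x) - h (τseq n x)‖ + ‖h (τseq n x) - h (τ x)‖
            + ‖h (τ x) - g (τ x)‖) := by gcongr
      _ = _ := by ring
  -- measurability facts
  have hmF : AEMeasurable (fun x => ENNReal.ofReal (‖F x - Fb x‖ * (2 * C))) m :=
    ENNReal.measurable_ofReal.comp_aemeasurable
      (((hF.aestronglyMeasurable.sub Fb_cont.aestronglyMeasurable).norm.aemeasurable).mul_const _)
  have hm2 : Measurable (fun x => ENNReal.ofReal (M * ‖g (τseq n x) - h (τseq n x)‖)) :=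
    (((hg.comp (hmeas n)).sub (h_cont.measurable.comp (hmeas n))).norm.const_mul M).ennreal_ofReal
  have hm3 : Measurable (fun x => ENNReal.ofReal (M * ‖h (τseq n x) - h (τ x)‖)) :=
    (((h_cont.measurable.comp (hmeas n)).sub
      (h_cont.measurable.comp hτmeas)).norm.const_mul M).ennreal_ofReal
  have hm4 : Measurable (fun x => ENNReal.ofReal (M * ‖h (τ x) - g (τ x)‖)) :=
    (((h_cont.measurable.comp hτmeas).sub (hg.comp hτmeas)).norm.const_mul M).ennreal_ofReal
  -- first piece
  have B1 : ∫⁻ x, ENNReal.ofReal (‖F x - Fb x‖ * (2 * C)) ∂m ≤ ENNReal.ofReal (ε / 4) := by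
    have he : ∀ x, ENNReal.ofReal (‖F x - Fb x‖ * (2 * C))
        = (‖F x - Fb x‖₊ : ℝ≥0∞) * ENNReal.ofReal (2 * C) := fun x => by
      rw [ENNReal.ofReal_mul (norm_nonneg _), ofReal_norm, enorm_eq_nnnorm]
    simp_rw [he]
    rw [lintegral_mul_const' _ _ ENNReal.ofReal_ne_top]
    calc (∫⁻ x, (‖F x - Fb x‖₊ : ℝ≥0∞) ∂m) * ENNReal.ofReal (2 * C)
        ≤ ENNReal.ofReal δ₁ * ENNReal.ofReal (2 * C) := by gcongr; exact hFb1
      _ = ENNReal.ofReal (δ₁ * (2 * C)) := (ENNReal.ofReal_mul hδ₁.le).symm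
      _ ≤ ENNReal.ofReal (ε / 4) := by
          apply ENNReal.ofReal_le_ofReal
          rw [hδ₁def, div_mul_eq_mul_div, div_le_div_iff₀ (by positivity) (by norm_num)]
          nlinarith [hε.le, hC0]
  have hgh : ∫⁻ x, ENNReal.ofReal ‖g x - h x‖ ∂m ≤ ENNReal.ofReal δ₂ := by
    simp_rw [ofReal_norm]; exact hh1
  have hghm : Measurable (fun y => ENNReal.ofReal ‖g y - h y‖) :=
    ((hg.sub h_cont.measurable).norm).ennreal_ofReal
  -- numeric bound used for the second and fourth pieces
  have hMK : ENNReal.ofReal M * (ENNReal.ofReal K * ENNReal.ofReal δ₂)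
      ≤ ENNReal.ofReal (ε / 8) := by
    rw [← ENNReal.ofReal_mul hK0, ← ENNReal.ofReal_mul hM0'.le]
    apply ENNReal.ofReal_le_ofReal
    have he : M * (K * δ₂) = ε * (M * K) / (8 * M * (K + 1)) := by
      rw [hδ₂def]; ring
    rw [he, div_le_div_iff₀ (by positivity) (by norm_num)]
    nlinarith [mul_pos hε hM0', mul_nonneg (mul_nonneg hε.le hM0'.le) hK0]
  -- second piece
  have B2 : ∫⁻ x, ENNReal.ofReal (M * ‖g (τseq n x) - h (τseq n x)‖) ∂m
      ≤ ENNReal.ofReal (ε / 8) := by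
    simp_rw [ENNReal.ofReal_mul hM0'.le]
    rw [lintegral_const_mul' _ _ ENNReal.ofReal_ne_top]
    calc ENNReal.ofReal M * ∫⁻ x, ENNReal.ofReal ‖g (τseq n x) - h (τseq n x)‖ ∂m
        ≤ ENNReal.ofReal M * (ENNReal.ofReal K * ∫⁻ y, ENNReal.ofReal ‖g y - h y‖ ∂m) := by
          gcongr
          exact lintegral_comp_le (hmeas n) K (hKn n) hghm
      _ ≤ ENNReal.ofReal M * (ENNReal.ofReal K * ENNReal.ofReal δ₂) := by gcongr
      _ ≤ ENNReal.ofReal (ε / 8) := hMK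
  -- third piece
  have B3 : ∫⁻ x, ENNReal.ofReal (M * ‖h (τseq n x) - h (τ x)‖) ∂m
      ≤ ENNReal.ofReal (ε / 4) := by
    have hb : ∀ᵐ x ∂m, ENNReal.ofReal (M * ‖h (τseq n x) - h (τ x)‖)
        ≤ ENNReal.ofReal (M * δ₃) := by
      filter_upwards [hae] with x hx
      apply ENNReal.ofReal_le_ofReal
      have hd : dist (h (τ x)) (h (τseq n x)) < δ₃ := hδ (hn x hx)
      have hnorm : ‖h (τseq n x) - h (τ x)‖ ≤ δ₃ := by
        rw [← dist_eq_norm, dist_comm]; exact hd.le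
      exact mul_le_mul_of_nonneg_left hnorm hM0'.le
    calc ∫⁻ x, ENNReal.ofReal (M * ‖h (τseq n x) - h (τ x)‖) ∂m
        ≤ ∫⁻ _, ENNReal.ofReal (M * δ₃) ∂m := lintegral_mono_ae hb
      _ = ENNReal.ofReal (M * δ₃) * m Set.univ := lintegral_const _
      _ = ENNReal.ofReal (M * δ₃) := by rw [m_univ, mul_one]
      _ = ENNReal.ofReal (ε / 4) := by
          congr 1
          rw [hδ₃def]
          field_simp
  -- fourth piece
  have B4 : ∫⁻ x, ENNReal.ofReal (M * ‖h (τ x) - g (τ x)‖) ∂m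
      ≤ ENNReal.ofReal (ε / 8) := by
    simp_rw [ENNReal.ofReal_mul hM0'.le]
    rw [lintegral_const_mul' _ _ ENNReal.ofReal_ne_top]
    have hghm' : Measurable (fun y => ENNReal.ofReal ‖h y - g y‖) :=
      ((h_cont.measurable.sub hg).norm).ennreal_ofReal
    have hgh' : ∫⁻ x, ENNReal.ofReal ‖h x - g x‖ ∂m ≤ ENNReal.ofReal δ₂ := by
      simp_rw [norm_sub_rev (h _)]
      exact hgh
    calc ENNReal.ofReal M * ∫⁻ x, ENNReal.ofReal ‖h (τ x) - g (τ x)‖ ∂m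
        ≤ ENNReal.ofReal M * (ENNReal.ofReal K * ∫⁻ y, ENNReal.ofReal ‖h y - g y‖ ∂m) := by
          gcongr
          exact lintegral_comp_le hτmeas K hK hghm'
      _ ≤ ENNReal.ofReal M * (ENNReal.ofReal K * ENNReal.ofReal δ₂) := by gcongr
      _ ≤ ENNReal.ofReal (ε / 8) := hMK
  -- combine
  have key : ∫⁻ x, ENNReal.ofReal ‖F x * (g (τseq n x) - g (τ x))‖ ∂m
      ≤ ENNReal.ofReal (3 * ε / 4) := by
    calc ∫⁻ x, ENNReal.ofReal ‖F x * (g (τseq n x) - g (τ x))‖ ∂m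
        ≤ ∫⁻ x, (ENNReal.ofReal (‖F x - Fb x‖ * (2 * C))
          + (ENNReal.ofReal (M * ‖g (τseq n x) - h (τseq n x)‖)
          + (ENNReal.ofReal (M * ‖h (τseq n x) - h (τ x)‖)
          + ENNReal.ofReal (M * ‖h (τ x) - g (τ x)‖)))) ∂m :=
          lintegral_mono hpt
      _ = (∫⁻ x, ENNReal.ofReal (‖F x - Fb x‖ * (2 * C)) ∂m)
          + ((∫⁻ x, ENNReal.ofReal (M * ‖g (τseq n x) - h (τseq n x)‖) ∂m)
          + ((∫⁻ x, ENNReal.ofReal (M * ‖h (τseq n x) - h (τ x)‖) ∂m)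
          + ∫⁻ x, ENNReal.ofReal (M * ‖h (τ x) - g (τ x)‖) ∂m)) := by
          rw [lintegral_add_left' hmF, lintegral_add_left hm2, lintegral_add_left hm3]
      _ ≤ ENNReal.ofReal (ε / 4) + (ENNReal.ofReal (ε / 8)
          + (ENNReal.ofReal (ε / 4) + ENNReal.ofReal (ε / 8))) := by
          gcongr
      _ = ENNReal.ofReal (3 * ε / 4) := by
          rw [← ENNReal.ofReal_add (by positivity) (by positivity),
              ← ENNReal.ofReal_add (by positivity) (by positivity),
              ← ENNReal.ofReal_add (by positivity) (by positivity)]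
          congr 1
          ring
  calc ‖∫ x, F x * (g (τseq n x) - g (τ x)) ∂m‖
      ≤ (∫⁻ x, ENNReal.ofReal ‖F x * (g (τseq n x) - g (τ x))‖ ∂m).toReal :=
        norm_integral_le_lintegral_norm _
    _ ≤ 3 * ε / 4 := ENNReal.toReal_le_of_le_ofReal (by positivity) key
    _ < ε := by linarith
end
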